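/- arXiv:1612.04654 — 2 statements merged into one kernel-verified Lean document; each statement's English description precedes it below -/
import Mathlib

section
/- Fix positive constants c₁, c₂, c₃, c₄, and P_max, and define f(P_S, P_R) = c₁·P_R/P_S + c₂/P_S + c₃·P_S/P_R + c₄/P_R on (0, P_max] × (0, ∞). Then f attains its minimum at P_S = P_max and P_R = √((P_max/c₁)·(c₃ P_max + c₄)). -/
lemma amgm_aux (x y : ℝ) (hx : 0 ≤ x) (hy : 0 ≤ y) :
    2 * Real.sqrt (x * y) ≤ x + y := by
  rw [Real.sqrt_mul hx]
  nlinarith [sq_nonneg (Real.sqrt x - Real.sqrt y), Real.sq_sqrt hx, Real.sq_sqrt hy,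
    Real.sqrt_nonneg x, Real.sqrt_nonneg y]

/-- For positive c₁, c₂, c₃, c₄, P_max, the function
    f(P_S, P_R) = c₁P_R/P_S + c₂/P_S + c₃P_S/P_R + c₄/P_R on (0,P_max]×(0,∞)
    attains its minimum at P_S = P_max, P_R = √((P_max/c₁)(c₃P_max + c₄)). -/
theorem stmt_13 (c₁ c₂ c₃ c₄ Pmax : ℝ) (h1 : 0 < c₁) (h2 : 0 < c₂)
    (h3 : 0 < c₃) (h4 : 0 < c₄) (hP : 0 < Pmax) :
    ∀ PS PR : ℝ, 0 < PS → PS ≤ Pmax → 0 < PR →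
      c₁ * Real.sqrt ((Pmax / c₁) * (c₃ * Pmax + c₄)) / Pmax + c₂ / Pmax +
          c₃ * Pmax / Real.sqrt ((Pmax / c₁) * (c₃ * Pmax + c₄)) +
          c₄ / Real.sqrt ((Pmax / c₁) * (c₃ * Pmax + c₄)) ≤
        c₁ * PR / PS + c₂ / PS + c₃ * PS / PR + c₄ / PR := by
  intro PS PR hPS hPSle hPR
  set A : ℝ := c₃ * Pmax + c₄ with hA
  have hApos : 0 < A := by positivity
  set R : ℝ := Real.sqrt ((Pmax / c₁) * A) with hRdef
  have hRpos : 0 < R := Real.sqrt_pos.mpr (by positivity)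
  have hR2 : R ^ 2 = (Pmax / c₁) * A := Real.sq_sqrt (by positivity)
  set s : ℝ := Real.sqrt (c₁ * A / Pmax) with hsdef
  have hspos : 0 < s := Real.sqrt_pos.mpr (by positivity)
  have hs2 : s ^ 2 = c₁ * A / Pmax := Real.sq_sqrt (by positivity)
  -- A / R = s and c₁ * R / Pmax = s
  have hsR : s * R = A := by
    have h : (s * R) ^ 2 = A ^ 2 := by
      rw [mul_pow, hs2, hR2]; field_simp
    nlinarith [mul_pos hspos hRpos, hApos]
  have hL : c₁ * R / Pmax + c₃ * Pmax / R + c₄ / R = 2 * s := by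
    have h1' : c₁ * R / Pmax = s := by
      have : c₁ * R ^ 2 = Pmax * A := by rw [hR2]; field_simp
      field_simp
      nlinarith [hsR]
    have h2' : c₃ * Pmax / R + c₄ / R = s := by
      rw [← add_div]
      rw [div_eq_iff hRpos.ne']
      linarith [hsR]
    linarith
  -- monotonicity and AM-GM
  have hmono : s ≤ Real.sqrt (c₁ * (c₃ * PS + c₄) / PS) := by
    apply Real.sqrt_le_sqrt
    rw [div_le_div_iff₀ hP hPS]
    ring_nf
    nlinarith [mul_le_mul_of_nonneg_left hPSle h4.le]
  have hamgm : 2 * Real.sqrt (c₁ * (c₃ * PS + c₄) / PS) ≤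
      c₁ * PR / PS + (c₃ * PS + c₄) / PR := by
    have key : (c₁ * PR / PS) * ((c₃ * PS + c₄) / PR) = c₁ * (c₃ * PS + c₄) / PS := by
      field_simp
    have := amgm_aux (c₁ * PR / PS) ((c₃ * PS + c₄) / PR) (by positivity) (by positivity)
    rwa [key] at this
  have hc2 : c₂ / Pmax ≤ c₂ / PS := by
    apply div_le_div_of_nonneg_left h2.le hPS hPSle
  have hsum : 2 * s ≤ c₁ * PR / PS + c₃ * PS / PR + c₄ / PR := by
    have : (c₃ * PS + c₄) / PR = c₃ * PS / PR + c₄ / PR := by ring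
    nlinarith [hmono, hamgm]
  linarith [hL, hsum, hc2]
end

section
/- Let γ̂_{k,i} > 0 for k = 1,…,n be the iterates of an algorithm where, with ν_{k,i} = γ̂_{k,i}/(1+γ̂_{k,i}) and λ_{k,i} = γ̂_{k,i}^{−ν_{k,i}}(1+γ̂_{k,i}), the next iterate (γ̂_{1,i+1},…,γ̂_{n,i+1}) maximizes Π_k λ_{k,i} γ_k^{ν_{k,i}} over a feasible set containing (γ̂_{1,i},…,γ̂_{n,i}). Then Π_k (1+γ̂_{k,i}) ≤ Π_k (1+γ̂_{k,i+1}). -/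
/-- Key per-coordinate bound: the monomial surrogate lies below 1+γ. -/
lemma stmt_16_aux {a b : ℝ} (ha : 0 < a) (hb : 0 < b) :
    (a ^ (-(a / (1 + a))) * (1 + a)) * b ^ (a / (1 + a)) ≤ 1 + b := by
  have h1a : (0:ℝ) < 1 + a := by linarith
  set ν : ℝ := a / (1 + a) with hν
  have hν0 : 0 ≤ ν := by positivity
  have hν1 : ν ≤ 1 := by rw [hν, div_le_one h1a]; linarith
  have key : (b / a) ^ ν * 1 ^ (1 - ν) ≤ ν * (b / a) + (1 - ν) * 1 :=
    Real.geom_mean_le_arith_mean2_weighted hν0 (by linarith)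
      (by positivity) zero_le_one (by ring)
  rw [Real.one_rpow, mul_one, mul_one] at key
  have hd : (b / a) ^ ν = b ^ ν / a ^ ν := Real.div_rpow hb.le ha.le ν
  have harith : ν * (b / a) + (1 - ν) = (1 + b) / (1 + a) := by
    rw [hν]; field_simp; ring
  rw [hd, harith] at key
  have hne : a ^ ν ≠ 0 := by positivity
  have : a ^ (-ν) * (1 + a) * b ^ ν = ((b ^ ν / a ^ ν) * (1 + a)) := by
    rw [Real.rpow_neg ha.le]; field_simp
  rw [this]
  calc b ^ ν / a ^ ν * (1 + a) ≤ (1 + b) / (1 + a) * (1 + a) := by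
        apply mul_le_mul_of_nonneg_right key h1a.le
    _ = 1 + b := by field_simp

/-- Monotone improvement of the successive-approximation GP algorithm: if the
    next iterate γ' maximizes the monomial surrogate Π_k λ_k γ_k^{ν_k}
    (built at the current positive iterate γ̂) over a feasible set S of
    positive points containing γ̂, then Π_k(1+γ̂_k) ≤ Π_k(1+γ'_k). -/
theorem stmt_16 (n : ℕ) (γhat γnext : Fin n → ℝ) (S : Set (Fin n → ℝ))
    (hpos : ∀ k, 0 < γhat k) (hSpos : ∀ γ ∈ S, ∀ k, 0 < γ k)
    (hmem : γhat ∈ S) (hnextS : γnext ∈ S)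
    (hmax : ∀ γ ∈ S,
      ∏ k, (γhat k ^ (-(γhat k / (1 + γhat k))) * (1 + γhat k)) *
          γ k ^ (γhat k / (1 + γhat k)) ≤
        ∏ k, (γhat k ^ (-(γhat k / (1 + γhat k))) * (1 + γhat k)) *
          γnext k ^ (γhat k / (1 + γhat k))) :
    ∏ k, (1 + γhat k) ≤ ∏ k, (1 + γnext k) := by
  have heq : ∏ k, (1 + γhat k) =
      ∏ k, (γhat k ^ (-(γhat k / (1 + γhat k))) * (1 + γhat k)) *
        γhat k ^ (γhat k / (1 + γhat k)) := by
    apply Finset.prod_congr rfl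
    intro k _
    have hk := hpos k
    rw [Real.rpow_neg hk.le]
    field_simp
  calc ∏ k, (1 + γhat k)
      = ∏ k, (γhat k ^ (-(γhat k / (1 + γhat k))) * (1 + γhat k)) *
          γhat k ^ (γhat k / (1 + γhat k)) := heq
    _ ≤ ∏ k, (γhat k ^ (-(γhat k / (1 + γhat k))) * (1 + γhat k)) *
          γnext k ^ (γhat k / (1 + γhat k)) := hmax γhat hmem
    _ ≤ ∏ k, (1 + γnext k) := by
        apply Finset.prod_le_prod
        · intro k _
          have := hpos k; have := hSpos γnext hnextS k
          positivity
        · intro k _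
          exact stmt_16_aux (hpos k) (hSpos γnext hnextS k)
end
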